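/- If F : S^d × S^d → R^{p×p} is a positive definite matrix-valued kernel and R_1, …, R_p ∈ SO(d+1) are rotation matrices, then the kernel F^a defined componentwise by F^a_{ij}(x,y) = F_{ij}(R_i x, R_j y) is also positive definite, i.e., for all n, points x_1,…,x_n ∈ S^d and vectors a_1,…,a_n ∈ R^p, ∑_{ℓ,r} a_ℓᵀ F^a(x_ℓ, x_r) a_r ≥ 0. -/
import Mathlib

open Matrix

/-- If `F : S^d × S^d → ℝ^{p×p}` is a positive definite matrix-valued kernel and
`R_1, …, R_p ∈ SO(d+1)`, then `F^a_{ij}(x,y) := F_{ij}(R_i x, R_j y)` is also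
positive definite. -/
theorem rotated_kernel_posdef (d p : ℕ)
    (F : (Fin (d + 1) → ℝ) → (Fin (d + 1) → ℝ) → Matrix (Fin p) (Fin p) ℝ)
    (hF : ∀ (n : ℕ) (x : Fin n → Fin (d + 1) → ℝ),
      (∀ ℓ, x ℓ ⬝ᵥ x ℓ = 1) → ∀ (a : Fin n → Fin p → ℝ),
      0 ≤ ∑ ℓ, ∑ r, a ℓ ⬝ᵥ (F (x ℓ) (x r)).mulVec (a r))
    (R : Fin p → Matrix (Fin (d + 1)) (Fin (d + 1)) ℝ)
    (hR : ∀ i, (R i).transpose * R i = 1) (hRdet : ∀ i, (R i).det = 1) :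
    ∀ (n : ℕ) (x : Fin n → Fin (d + 1) → ℝ),
      (∀ ℓ, x ℓ ⬝ᵥ x ℓ = 1) → ∀ (a : Fin n → Fin p → ℝ),
      0 ≤ ∑ ℓ, ∑ r, a ℓ ⬝ᵥ
        (Matrix.of fun i j : Fin p =>
          F ((R i).mulVec (x ℓ)) ((R j).mulVec (x r)) i j).mulVec (a r) := by
  intro n x hx a
  set e : Fin n × Fin p ≃ Fin (n * p) := finProdFinEquiv
  set y : Fin (n * p) → Fin (d + 1) → ℝ :=
    fun k => (R (e.symm k).2).mulVec (x (e.symm k).1) with hy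
  set b : Fin (n * p) → Fin p → ℝ :=
    fun k => Pi.single (e.symm k).2 (a (e.symm k).1 (e.symm k).2) with hb
  have hnorm : ∀ k, y k ⬝ᵥ y k = 1 := by
    intro k
    have h : x (e.symm k).1 ⬝ᵥ
        ((R (e.symm k).2).transpose * R (e.symm k).2).mulVec (x (e.symm k).1)
        = y k ⬝ᵥ y k := by
      rw [← mulVec_mulVec, dotProduct_mulVec, vecMul_transpose]
    rw [← h, hR, one_mulVec, hx]
  have key := hF (n * p) y hnorm b
  have h1 : ∀ (f : Fin (n * p) → ℝ), ∑ m, f m = ∑ r, ∑ j, f (e (r, j)) := by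
    intro f
    rw [← e.sum_comp f, Fintype.sum_prod_type]
  have expand : ∑ k, ∑ m, b k ⬝ᵥ (F (y k) (y m)).mulVec (b m)
      = ∑ ℓ, ∑ r, a ℓ ⬝ᵥ
        (Matrix.of fun i j : Fin p =>
          F ((R i).mulVec (x ℓ)) ((R j).mulVec (x r)) i j).mulVec (a r) := by
    simp only [h1]
    refine Finset.sum_congr rfl fun ℓ _ => ?_
    rw [Finset.sum_comm]
    refine Finset.sum_congr rfl fun r _ => ?_
    simp only [hy, hb, Equiv.symm_apply_apply, dotProduct, mulVec, of_apply,
      Pi.single_apply]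
    simp [Finset.mul_sum, mul_ite, ite_mul, Finset.sum_ite_eq, mul_comm,
      mul_left_comm]
  rw [expand] at key
  exact key
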